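/- Let G be a finite abelian group with dual group Ĝ, and let S ⊆ G and T ⊆ Ĝ be nonempty subsets. Suppose that for every y ∈ Ĝ, |(1/|S|) ∑_{v ∈ S} y(v)|² = (1/|T|) · #{(w,w') ∈ T × T : y = w - w'}. Then |S| · |T| = |G|. -/

import Mathlib

open scoped Classical

open Finset

section aux
variable {G : Type*} [AddCommGroup G] [Fintype G]

lemma sum_lhs_aux (S : Finset G) :
    ∑ y : AddChar G ℂ, ‖(S.card : ℂ)⁻¹ * ∑ v ∈ S, y v‖ ^ 2
      = (S.card : ℝ)⁻¹ ^ 2 * (S.card * Fintype.card G) := by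
  simp_rw [norm_mul, mul_pow, norm_inv, Complex.norm_natCast, ← Finset.mul_sum]
  congr 1
  have : ((∑ y : AddChar G ℂ, ‖∑ v ∈ S, y v‖ ^ 2 : ℝ) : ℂ)
      = ((S.card * Fintype.card G : ℝ) : ℂ) := by
    push_cast
    calc (∑ y : AddChar G ℂ, ((‖∑ v ∈ S, y v‖ : ℂ) ^ 2 : ℂ))
        = ∑ y : AddChar G ℂ, (∑ v ∈ S, y v) * (starRingEnd ℂ) (∑ v ∈ S, y v) := by
          refine Finset.sum_congr rfl fun y _ => ?_
          rw [Complex.mul_conj]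
          norm_cast
          exact Complex.sq_norm _
      _ = ∑ v ∈ S, ∑ v' ∈ S, ∑ y : AddChar G ℂ, y (v - v') := by
          simp_rw [map_sum, Finset.sum_mul_sum]
          rw [Finset.sum_comm]
          refine Finset.sum_congr rfl fun v _ => ?_
          rw [Finset.sum_comm]
          refine Finset.sum_congr rfl fun v' _ => ?_
          refine Finset.sum_congr rfl fun y _ => ?_
          rw [← AddChar.map_neg_eq_conj, ← AddChar.map_add_eq_mul, sub_eq_add_neg]
      _ = ∑ v ∈ S, ∑ v' ∈ S, if v - v' = 0 then (Fintype.card G : ℂ) else 0 := by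
          simp_rw [AddChar.sum_apply_eq_ite]
      _ = (S.card : ℂ) * Fintype.card G := by
          simp_rw [sub_eq_zero]
          rw [Finset.sum_comm]
          simp [Finset.sum_ite_eq, Finset.mul_sum]
  exact_mod_cast this

lemma sum_rhs_aux (T : Finset (AddChar G ℂ)) :
    ∑ y : AddChar G ℂ, ((T.card : ℝ)⁻¹ * ((T ×ˢ T).filter fun p => y = p.1 - p.2).card)
      = (T.card : ℝ)⁻¹ * (T.card * T.card) := by
  rw [← Finset.mul_sum]
  congr 1
  have : ((T ×ˢ T).card : ℝ) = ∑ y : AddChar G ℂ, (((T ×ˢ T).filter fun p => y = p.1 - p.2).card : ℝ) := by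
    norm_cast
    rw [Finset.card_eq_sum_card_fiberwise (f := fun p => p.1 - p.2) (t := Finset.univ)
      fun p _ => Finset.mem_univ _]
    exact Finset.sum_congr rfl fun y _ => by
      congr 1
      exact Finset.filter_congr fun p _ => by simp [eq_comm]
  rw [← this, Finset.card_product]
  push_cast
  ring

end aux

/-- Pointwise formal duality condition for `S ⊆ G` and `T ⊆ Ĝ`, where the dual group `Ĝ`
is realized as the group `AddChar G ℂ` of complex-valued additive characters of `G`
(whose values lie on the unit circle), written additively. -/
def IsFormallyDual {G : Type*} [AddCommGroup G] [Fintype G]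
    (S : Finset G) (T : Finset (AddChar G ℂ)) : Prop :=
  ∀ y : AddChar G ℂ,
    ‖(S.card : ℂ)⁻¹ * ∑ v ∈ S, y v‖ ^ 2 =
      (T.card : ℝ)⁻¹ * ((T ×ˢ T).filter fun p => y = p.1 - p.2).card

theorem stmt_0 {G : Type*} [AddCommGroup G] [Fintype G]
    (S : Finset G) (T : Finset (AddChar G ℂ))
    (hS : S.Nonempty) (hT : T.Nonempty)
    (h : IsFormallyDual S T) :
    S.card * T.card = Fintype.card G := by
  have hSc : (S.card : ℝ) ≠ 0 := Nat.cast_ne_zero.2 hS.card_pos.ne'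
  have hTc : (T.card : ℝ) ≠ 0 := Nat.cast_ne_zero.2 hT.card_pos.ne'
  have key : ∑ y : AddChar G ℂ, ‖(S.card : ℂ)⁻¹ * ∑ v ∈ S, y v‖ ^ 2
      = ∑ y : AddChar G ℂ, ((T.card : ℝ)⁻¹ * ((T ×ˢ T).filter fun p => y = p.1 - p.2).card) :=
    Finset.sum_congr rfl fun y _ => h y
  rw [sum_lhs_aux, sum_rhs_aux] at key
  have : (S.card : ℝ) * T.card = Fintype.card G := by
    field_simp at key
    have h2 : (S.card : ℝ) * Fintype.card G = (S.card : ℝ) * (S.card * T.card) :=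
      by rw [key]
    have := mul_left_cancel₀ hSc h2
    linarith
  exact_mod_cast this
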